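/- Let G be a locally compact second countable group and K a compact group. If Q is a discrete (closed) subgroup of G × K, then the projection of Q to G is a discrete subgroup of G. -/

import Mathlib

/-- If `Q` is a discrete closed subgroup of `G × K` with `G` a locally compact
second countable group and `K` a compact group, then the projection of `Q` to
`G` is a discrete subgroup of `G`. -/
theorem stmt1 {G K : Type*} [Group G] [TopologicalSpace G] [IsTopologicalGroup G]
    [LocallyCompactSpace G] [SecondCountableTopology G]
    [Group K] [TopologicalSpace K] [IsTopologicalGroup K] [CompactSpace K]
    (Q : Subgroup (G × K)) (hQclosed : IsClosed (Q : Set (G × K)))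
    (hQdisc : DiscreteTopology Q) :
    DiscreteTopology (Q.map (MonoidHom.fst G K)) := by
  -- every point of Q is closed in G × K
  have hptQ : ∀ q ∈ Q, IsClosed ({q} : Set (G × K)) := by
    intro q hq
    have h1 : IsClosed ({(⟨q, hq⟩ : Q)} : Set Q) := isClosed_discrete _
    have h2 := hQclosed.isClosedEmbedding_subtypeVal.isClosedMap _ h1
    simpa using h2
  -- hence the first coordinate of every point of Q is closed in G
  have hptG : ∀ q ∈ Q, IsClosed ({q.1} : Set G) := by
    intro q hq
    have hsingle : ({q.1} : Set G) ×ˢ ({q.2} : Set K) = {q} := by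
      ext x; simp [Prod.ext_iff]
    apply isClosed_of_closure_subset
    intro g' hg'
    have hmem : (g', q.2) ∈ closure (({q.1} : Set G) ×ˢ ({q.2} : Set K)) := by
      rw [closure_prod_eq]
      exact ⟨hg', subset_closure rfl⟩
    rw [hsingle, (hptQ q hq).closure_eq] at hmem
    have : g' = q.1 := congrArg Prod.fst hmem
    simpa using this
  -- a compact neighborhood of 1 in G
  obtain ⟨C, hCcomp, hCnhds⟩ := exists_compact_mem_nhds (1 : G)
  -- Q ∩ (C × K) is finite
  set S : Set (G × K) := (Q : Set (G × K)) ∩ C ×ˢ (Set.univ : Set K) with hS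
  have hScomp : IsCompact S := (hCcomp.prod isCompact_univ).inter_left hQclosed
  have hSdisc : DiscreteTopology S :=
    DiscreteTopology.of_subset hQdisc (Set.inter_subset_left)
  have hSfin : S.Finite := hScomp.finite ⟨hSdisc⟩
  -- the finite set of first coordinates
  set T : Set G := Prod.fst '' S with hT
  have hTfin : T.Finite := hSfin.image _
  have hT'closed : IsClosed (T \ {1}) := by
    have : T \ {1} = ⋃ g ∈ T \ {1}, {g} := by ext y; simp
    rw [this]
    refine (hTfin.diff (t := {1})).isClosed_biUnion ?_
    rintro g ⟨⟨q, hqS, rfl⟩, -⟩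
    exact hptG q hqS.1
  -- the open set isolating 1
  set U : Set G := interior C \ (T \ {1}) with hU
  have hUopen : IsOpen U := isOpen_interior.sdiff hT'closed
  have hUone : (1 : G) ∈ U := ⟨mem_interior_iff_mem_nhds.mpr hCnhds, fun h => h.2 rfl⟩
  -- {1} is open in the projected subgroup
  have hkey : IsOpen ({1} : Set (Q.map (MonoidHom.fst G K))) := by
    have : ({1} : Set (Q.map (MonoidHom.fst G K))) =
        ((↑) : (Q.map (MonoidHom.fst G K)) → G) ⁻¹' U := by
      ext x
      simp only [Set.mem_singleton_iff, Set.mem_preimage]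
      constructor
      · rintro rfl; exact hUone
      · intro hx
        obtain ⟨q, hqQ, hq1⟩ := x.2
        have hxT : (x : G) ∈ T := by
          refine ⟨q, ⟨hqQ, interior_subset ?_, trivial⟩, hq1⟩
          show (MonoidHom.fst G K) q ∈ interior C
          rw [hq1]; exact hx.1
        have : (x : G) = 1 := by
          by_contra hne
          exact hx.2 ⟨hxT, hne⟩
        exact Subtype.ext this
    rw [this]
    exact hUopen.preimage continuous_subtype_val
  exact discreteTopology_of_isOpen_singleton_one hkey
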